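/- Let G be a strongly regular graph with parameters (n, k, 1, 2). Then the number of induced 5-cycles (pentagons) in G is exactly n*k*(k-2)*(k-4)/5. -/

import Mathlib

/-- The number of `m`-element vertex subsets of `G` inducing a cycle of length `m`. -/
noncomputable def inducedCycleCount {V : Type*} [Fintype V] (G : SimpleGraph V) (m : ℕ) : ℕ :=
  Set.ncard {s : Finset V | s.card = m ∧
    Nonempty (G.induce (↑s : Set V) ≃g SimpleGraph.cycleGraph m)}

set_option linter.unusedSectionVars false

open SimpleGraph Finset

namespace Pentagon

variable {V : Type*} [Fintype V] [DecidableEq V] (G : SimpleGraph V) [DecidableRel G.Adj]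

/-- common neighbor finset -/
def cn (a b : V) : Finset V := G.neighborFinset a ∩ G.neighborFinset b

variable {G}

lemma mem_cn {a b x : V} : x ∈ cn G a b ↔ G.Adj a x ∧ G.Adj b x := by
  simp [cn, adj_comm]

lemma cn_card {a b : V} : (cn G a b).card = Fintype.card (G.commonNeighbors a b) := by
  rw [← Set.toFinset_card]
  congr 1
  ext x
  rw [Set.mem_toFinset]; simp [cn, commonNeighbors, mem_neighborFinset, adj_comm]

variable {n k : ℕ} (h : G.IsSRGWith n k 1 2)
include h

lemma cn_adj {a b : V} (hab : G.Adj a b) : (cn G a b).card = 1 := by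
  rw [cn_card]; exact h.of_adj a b hab

lemma cn_not_adj {a b : V} (hab : ¬ G.Adj a b) (hne : a ≠ b) : (cn G a b).card = 2 := by
  rw [cn_card]; exact h.of_not_adj hne hab

/-- uniqueness of common neighbor of adjacent pair -/
lemma lam_unique {a b x y : V} (hab : G.Adj a b) (hx1 : G.Adj a x) (hx2 : G.Adj b x)
    (hy1 : G.Adj a y) (hy2 : G.Adj b y) : x = y := by
  have hc := cn_adj h hab
  rw [Finset.card_eq_one] at hc
  obtain ⟨z, hz⟩ := hc
  have hx : x ∈ cn G a b := mem_cn.2 ⟨hx1, hx2⟩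
  have hy : y ∈ cn G a b := mem_cn.2 ⟨hy1, hy2⟩
  rw [hz, Finset.mem_singleton] at hx hy
  rw [hx, hy]

lemma lam_exists {a b : V} (hab : G.Adj a b) : ∃ w, G.Adj a w ∧ G.Adj b w := by
  have hc := cn_adj h hab
  rw [Finset.card_eq_one] at hc
  obtain ⟨z, hz⟩ := hc
  have : z ∈ cn G a b := by rw [hz]; exact Finset.mem_singleton_self z
  exact ⟨z, mem_cn.1 this⟩

/-- the other common neighbor of a nonadjacent pair -/
lemma mu_other {a b x : V} (hab : ¬ G.Adj a b) (hne : a ≠ b)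
    (hx : G.Adj a x) (hx' : G.Adj b x) :
    ∃ y, G.Adj a y ∧ G.Adj b y ∧ y ≠ x ∧ ∀ z, G.Adj a z → G.Adj b z → z = x ∨ z = y := by
  have hc := cn_not_adj h hab hne
  rw [Finset.card_eq_two] at hc
  obtain ⟨u, v, huv, huvs⟩ := hc
  have hxm : x ∈ cn G a b := mem_cn.2 ⟨hx, hx'⟩
  rw [huvs] at hxm
  simp only [Finset.mem_insert, Finset.mem_singleton] at hxm
  rcases hxm with rfl | rfl
  · refine ⟨v, ?_, ?_, huv.symm, ?_⟩
    · exact (mem_cn.1 (by rw [huvs]; simp)).1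
    · exact (mem_cn.1 (by rw [huvs]; simp)).2
    · intro z hz1 hz2
      have : z ∈ cn G a b := mem_cn.2 ⟨hz1, hz2⟩
      rw [huvs] at this; simpa using this
  · refine ⟨u, ?_, ?_, huv, ?_⟩
    · exact (mem_cn.1 (by rw [huvs]; simp)).1
    · exact (mem_cn.1 (by rw [huvs]; simp)).2
    · intro z hz1 hz2
      have : z ∈ cn G a b := mem_cn.2 ⟨hz1, hz2⟩
      rw [huvs] at this
      simp only [Finset.mem_insert, Finset.mem_singleton] at this
      tauto

end Pentagon

namespace Pentagon

set_option linter.unusedSectionVars false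

variable {V : Type*} [Fintype V] [DecidableEq V] {G : SimpleGraph V} [DecidableRel G.Adj]
variable {n k : ℕ}

/-- common neighbor of adjacent pair is not adjacent to a "path extension" -/
lemma w_not_adj_c (h : G.IsSRGWith n k 1 2) {a b c w : V} (hab : G.Adj a b)
    (hbc : G.Adj b c) (hac : a ≠ c) (haw : G.Adj a w) (hbw : G.Adj b w) :
    ¬ G.Adj w c := by
  intro hwc
  exact hac (lam_unique h hbw hab.symm haw.symm hbc hwc)

lemma degree_count (h : G.IsSRGWith n k 1 2) (a : V) :
    (Finset.univ.filter (fun b => G.Adj a b)).card = k := by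
  have : Finset.univ.filter (fun b => G.Adj a b) = G.neighborFinset a := by
    ext x; simp [mem_neighborFinset]
  rw [this, card_neighborFinset_eq_degree]
  exact h.regular a

lemma card_c (h : G.IsSRGWith n k 1 2) {a b : V} (hab : G.Adj a b) :
    (Finset.univ.filter (fun c => G.Adj b c ∧ ¬ G.Adj a c ∧ a ≠ c)).card = k - 2 := by
  have hset : Finset.univ.filter (fun c => G.Adj b c ∧ ¬ G.Adj a c ∧ a ≠ c)
      = G.neighborFinset b \ ({a} ∪ cn G a b) := by
    ext x
    simp only [Finset.mem_filter, Finset.mem_univ, true_and, Finset.mem_sdiff,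
      mem_neighborFinset, Finset.mem_union, Finset.mem_singleton, mem_cn]
    constructor
    · rintro ⟨h1, h2, h3⟩
      exact ⟨h1, by rintro (rfl | ⟨h4, h5⟩) <;> [exact h3 rfl; exact h2 h4]⟩
    · rintro ⟨h1, h2⟩
      push_neg at h2
      exact ⟨h1, fun hax => (h2.2 hax h1), fun hax => h2.1 hax.symm⟩
  rw [hset, Finset.card_sdiff_of_subset]
  · rw [Finset.card_union_of_disjoint, Finset.card_singleton, cn_adj h hab,
      card_neighborFinset_eq_degree, h.regular b]
    simp only [Finset.disjoint_singleton_left, mem_cn]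
    rintro ⟨ha, _⟩
    exact G.irrefl ha
  · intro x hx
    simp only [Finset.mem_union, Finset.mem_singleton, mem_cn] at hx
    rw [mem_neighborFinset]
    rcases hx with rfl | ⟨_, hx2⟩
    · exact hab.symm
    · exact hx2

lemma card_d (h : G.IsSRGWith n k 1 2) {a b c : V} (hab : G.Adj a b) (hbc : G.Adj b c)
    (hac : ¬ G.Adj a c) (hac' : a ≠ c) :
    (Finset.univ.filter (fun d => G.Adj c d ∧ ¬ G.Adj a d ∧ ¬ G.Adj b d)).card = k - 3 := by
  have hdisj : Disjoint (cn G a c) (cn G b c) := by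
    rw [Finset.disjoint_left]
    rintro x hx1 hx2
    rw [mem_cn] at hx1 hx2
    exact w_not_adj_c h hab hbc hac' hx1.1 hx2.1 hx1.2.symm
  have hset : Finset.univ.filter (fun d => G.Adj c d ∧ ¬ G.Adj a d ∧ ¬ G.Adj b d)
      = G.neighborFinset c \ (cn G a c ∪ cn G b c) := by
    ext x
    simp only [Finset.mem_filter, Finset.mem_univ, true_and, Finset.mem_sdiff,
      mem_neighborFinset, Finset.mem_union, mem_cn]
    constructor
    · rintro ⟨h1, h2, h3⟩
      exact ⟨h1, by rintro (⟨h4, _⟩ | ⟨h4, _⟩) <;> [exact h2 h4; exact h3 h4]⟩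
    · rintro ⟨h1, h2⟩
      push_neg at h2
      exact ⟨h1, fun hx => h2.1 hx h1, fun hx => h2.2 hx h1⟩
  rw [hset, Finset.card_sdiff_of_subset]
  · rw [Finset.card_union_of_disjoint hdisj, cn_not_adj h hac hac', cn_adj h hbc,
      card_neighborFinset_eq_degree, h.regular c]
  · intro x hx
    simp only [Finset.mem_union, mem_cn] at hx
    rw [mem_neighborFinset]
    rcases hx with ⟨_, hx2⟩ | ⟨_, hx2⟩ <;> exact hx2

lemma bad1_unique (h : G.IsSRGWith n k 1 2) {a b c : V} (hab : G.Adj a b) (hbc : G.Adj b c)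
    (hac : ¬ G.Adj a c) (hac' : a ≠ c) :
    ∃! p : V × V, (G.Adj c p.1 ∧ ¬ G.Adj a p.1 ∧ ¬ G.Adj b p.1) ∧
      G.Adj a p.2 ∧ G.Adj p.1 p.2 ∧ G.Adj b p.2 := by
  obtain ⟨w, haw, hbw⟩ := lam_exists h hab
  have hwc : ¬ G.Adj w c := w_not_adj_c h hab hbc hac' haw hbw
  have hwc' : w ≠ c := fun hwceq => hac (hwceq ▸ haw)
  -- common neighbors of w and c: b is one, t is the other
  obtain ⟨t, hwt, hct, htb, huniq⟩ := mu_other h hwc hwc' hbw.symm hbc.symm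
  have hta : t ≠ a := fun h' => hac (h' ▸ hct).symm
  have hat : ¬ G.Adj a t := by
    intro hat
    exact htb (lam_unique h haw hat hwt hab hbw.symm)
  have hbt : ¬ G.Adj b t := by
    intro hbt
    exact hta (lam_unique h hbw hbt hwt hab.symm haw.symm)
  refine ⟨(t, w), ⟨⟨hct, hat, hbt⟩, haw, hwt.symm, hbw⟩, ?_⟩
  · rintro ⟨d, z⟩ ⟨⟨hcd, had, hbd⟩, haz, hdz, hbz⟩
    have hzw : z = w := lam_unique h hab haz hbz haw hbw
    subst hzw
    have : d = b ∨ d = t := huniq d hdz.symm hcd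
    rcases this with rfl | rfl
    · exact absurd hab had
    · rfl

lemma card_filter_prod {α β : Type*} [Fintype α] [Fintype β] (p : α × β → Prop) [DecidablePred p] :
    (Finset.univ.filter p).card = ∑ a : α, (Finset.univ.filter (fun b => p (a, b))).card := by
  rw [Finset.card_filter, Fintype.sum_prod_type]
  exact Finset.sum_congr rfl (fun a _ => (Finset.card_filter _ _).symm)

lemma sum_ite_count {α : Type*} [Fintype α] (p : α → Prop) [DecidablePred p] (m : ℕ) :
    (∑ a : α, if p a then m else 0) = (Finset.univ.filter p).card * m := by
  rw [← Finset.sum_filter, Finset.sum_const, smul_eq_mul]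

variable (G) in
/-- ordered induced path on 4 vertices -/
abbrev qp (a b c d : V) : Prop :=
  G.Adj a b ∧ G.Adj b c ∧ G.Adj c d ∧ ¬ G.Adj a c ∧ ¬ G.Adj a d ∧ ¬ G.Adj b d

variable (G) in
/-- ordered induced pentagon -/
abbrev tp (a b c d e : V) : Prop :=
  qp G a b c d ∧ G.Adj a e ∧ G.Adj d e ∧ ¬ G.Adj b e ∧ ¬ G.Adj c e

lemma qp_ne {a b c d : V} (hq : qp G a b c d) : a ≠ c ∧ a ≠ d ∧ b ≠ d := by
  obtain ⟨h1, h2, h3, h4, h5, h6⟩ := hq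
  refine ⟨?_, ?_, ?_⟩
  · rintro rfl; exact h5 h3
  · rintro rfl; exact h4 h3.symm
  · rintro rfl; exact h5 h1

lemma card_d_ite (h : G.IsSRGWith n k 1 2) (a b c : V) :
    (Finset.univ.filter (fun d => qp G a b c d)).card =
      if G.Adj a b ∧ G.Adj b c ∧ ¬ G.Adj a c ∧ a ≠ c then k - 3 else 0 := by
  split_ifs with hq
  · rw [Finset.filter_congr (q := fun d => G.Adj c d ∧ ¬ G.Adj a d ∧ ¬ G.Adj b d)
      (fun d _ => ⟨fun hd => ⟨hd.2.2.1, hd.2.2.2.2.1, hd.2.2.2.2.2⟩,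
        fun hd => ⟨hq.1, hq.2.1, hd.1, hq.2.2.1, hd.2.1, hd.2.2⟩⟩)]
    exact card_d h hq.1 hq.2.1 hq.2.2.1 hq.2.2.2
  · rw [Finset.card_eq_zero, Finset.filter_eq_empty_iff]
    intro d _ hd
    exact hq ⟨hd.1, hd.2.1, hd.2.2.2.1, (qp_ne hd).1⟩

lemma card_q3_ite (h : G.IsSRGWith n k 1 2) (a b : V) :
    (Finset.univ.filter (fun c => G.Adj a b ∧ G.Adj b c ∧ ¬ G.Adj a c ∧ a ≠ c)).card =
      if G.Adj a b then k - 2 else 0 := by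
  split_ifs with hab
  · rw [Finset.filter_congr (q := fun c => G.Adj b c ∧ ¬ G.Adj a c ∧ a ≠ c)
      (fun c _ => ⟨fun hc => hc.2, fun hc => ⟨hab, hc⟩⟩)]
    exact card_c h hab
  · rw [Finset.card_eq_zero, Finset.filter_eq_empty_iff]
    intro c _ hc
    exact hab hc.1

lemma Q_count (h : G.IsSRGWith n k 1 2) :
    (Finset.univ.filter (fun t : V × V × V × V => qp G t.1 t.2.1 t.2.2.1 t.2.2.2)).card
      = n * (k * ((k - 2) * (k - 3))) := by
  rw [card_filter_prod]
  have L3 : ∀ a : V, (Finset.univ.filter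
      (fun x : V × V × V => qp G a x.1 x.2.1 x.2.2)).card = k * ((k - 2) * (k - 3)) := by
    intro a
    rw [card_filter_prod]
    have L2 : ∀ b : V, (Finset.univ.filter
        (fun x : V × V => qp G a b x.1 x.2)).card =
          if G.Adj a b then (k - 2) * (k - 3) else 0 := by
      intro b
      rw [card_filter_prod]
      calc (∑ c : V, (Finset.univ.filter (fun d => qp G a b c d)).card)
          = ∑ c : V, if G.Adj a b ∧ G.Adj b c ∧ ¬ G.Adj a c ∧ a ≠ c then k - 3 else 0 :=
            Finset.sum_congr rfl (fun c _ => card_d_ite h a b c)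
        _ = (Finset.univ.filter
              (fun c => G.Adj a b ∧ G.Adj b c ∧ ¬ G.Adj a c ∧ a ≠ c)).card * (k - 3) :=
            sum_ite_count _ _
        _ = (if G.Adj a b then k - 2 else 0) * (k - 3) := by rw [card_q3_ite h]
        _ = if G.Adj a b then (k - 2) * (k - 3) else 0 := by split_ifs <;> simp
    calc (∑ b : V, (Finset.univ.filter (fun x : V × V => qp G a b x.1 x.2)).card)
        = ∑ b : V, if G.Adj a b then (k - 2) * (k - 3) else 0 :=
          Finset.sum_congr rfl (fun b _ => L2 b)
      _ = (Finset.univ.filter (fun b => G.Adj a b)).card * ((k - 2) * (k - 3)) :=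
          sum_ite_count _ _
      _ = k * ((k - 2) * (k - 3)) := by rw [degree_count h]
  calc (∑ a : V, (Finset.univ.filter (fun x : V × V × V => qp G a x.1 x.2.1 x.2.2)).card)
      = ∑ a : V, k * ((k - 2) * (k - 3)) := Finset.sum_congr rfl (fun a _ => L3 a)
    _ = n * (k * ((k - 2) * (k - 3))) := by
        rw [Finset.sum_const, Finset.card_univ, h.card, smul_eq_mul]

lemma card_bad1_inner (h : G.IsSRGWith n k 1 2) (a b c : V) :
    (Finset.univ.filter (fun p : V × V =>
        qp G a b c p.1 ∧ G.Adj a p.2 ∧ G.Adj p.1 p.2 ∧ G.Adj b p.2)).card =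
      if G.Adj a b ∧ G.Adj b c ∧ ¬ G.Adj a c ∧ a ≠ c then 1 else 0 := by
  split_ifs with hq
  · obtain ⟨p0, hp0, huniq⟩ := bad1_unique h hq.1 hq.2.1 hq.2.2.1 hq.2.2.2
    rw [Finset.card_eq_one]
    refine ⟨p0, ?_⟩
    ext p
    simp only [Finset.mem_filter, Finset.mem_univ, true_and, Finset.mem_singleton]
    constructor
    · intro hp
      exact huniq p ⟨⟨hp.1.2.2.1, hp.1.2.2.2.2.1, hp.1.2.2.2.2.2⟩, hp.2⟩
    · rintro rfl
      exact ⟨⟨hq.1, hq.2.1, hp0.1.1, hq.2.2.1, hp0.1.2.1, hp0.1.2.2⟩, hp0.2⟩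
  · rw [Finset.card_eq_zero, Finset.filter_eq_empty_iff]
    intro p _ hp
    exact hq ⟨hp.1.1, hp.1.2.1, hp.1.2.2.2.1, (qp_ne hp.1).1⟩

lemma Bad1_count (h : G.IsSRGWith n k 1 2) :
    (Finset.univ.filter (fun t : V × V × V × V × V =>
        qp G t.1 t.2.1 t.2.2.1 t.2.2.2.1 ∧ G.Adj t.1 t.2.2.2.2 ∧
          G.Adj t.2.2.2.1 t.2.2.2.2 ∧ G.Adj t.2.1 t.2.2.2.2)).card
      = n * (k * (k - 2)) := by
  rw [card_filter_prod]
  have L3 : ∀ a : V, (Finset.univ.filter (fun x : V × V × V × V =>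
      qp G a x.1 x.2.1 x.2.2.1 ∧ G.Adj a x.2.2.2 ∧
        G.Adj x.2.2.1 x.2.2.2 ∧ G.Adj x.1 x.2.2.2)).card = k * (k - 2) := by
    intro a
    rw [card_filter_prod]
    have L2 : ∀ b : V, (Finset.univ.filter (fun x : V × V × V =>
        qp G a b x.1 x.2.1 ∧ G.Adj a x.2.2 ∧ G.Adj x.2.1 x.2.2 ∧ G.Adj b x.2.2)).card =
          if G.Adj a b then k - 2 else 0 := by
      intro b
      rw [card_filter_prod]
      calc (∑ c : V, (Finset.univ.filter (fun p : V × V =>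
              qp G a b c p.1 ∧ G.Adj a p.2 ∧ G.Adj p.1 p.2 ∧ G.Adj b p.2)).card)
          = ∑ c : V, if G.Adj a b ∧ G.Adj b c ∧ ¬ G.Adj a c ∧ a ≠ c then 1 else 0 :=
            Finset.sum_congr rfl (fun c _ => card_bad1_inner h a b c)
        _ = (Finset.univ.filter
              (fun c => G.Adj a b ∧ G.Adj b c ∧ ¬ G.Adj a c ∧ a ≠ c)).card * 1 :=
            sum_ite_count _ _
        _ = if G.Adj a b then k - 2 else 0 := by rw [card_q3_ite h, mul_one]
    calc (∑ b : V, (Finset.univ.filter (fun x : V × V × V =>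
            qp G a b x.1 x.2.1 ∧ G.Adj a x.2.2 ∧ G.Adj x.2.1 x.2.2 ∧ G.Adj b x.2.2)).card)
        = ∑ b : V, if G.Adj a b then k - 2 else 0 := Finset.sum_congr rfl (fun b _ => L2 b)
      _ = (Finset.univ.filter (fun b => G.Adj a b)).card * (k - 2) := sum_ite_count _ _
      _ = k * (k - 2) := by rw [degree_count h]
  calc (∑ a : V, (Finset.univ.filter (fun x : V × V × V × V =>
          qp G a x.1 x.2.1 x.2.2.1 ∧ G.Adj a x.2.2.2 ∧
            G.Adj x.2.2.1 x.2.2.2 ∧ G.Adj x.1 x.2.2.2)).card)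
      = ∑ a : V, k * (k - 2) := Finset.sum_congr rfl (fun a _ => L3 a)
    _ = n * (k * (k - 2)) := by rw [Finset.sum_const, Finset.card_univ, h.card, smul_eq_mul]

lemma qp_rev {a b c d : V} (hq : qp G a b c d) : qp G d c b a := by
  obtain ⟨h1, h2, h3, h4, h5, h6⟩ := hq
  exact ⟨h3.symm, h2.symm, h1.symm, fun x => h6 x.symm, fun x => h5 x.symm, fun x => h4 x.symm⟩

lemma Bad2_eq_Bad1 :
    (Finset.univ.filter (fun t : V × V × V × V × V =>
        qp G t.1 t.2.1 t.2.2.1 t.2.2.2.1 ∧ G.Adj t.1 t.2.2.2.2 ∧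
          G.Adj t.2.2.2.1 t.2.2.2.2 ∧ G.Adj t.2.2.1 t.2.2.2.2)).card
    = (Finset.univ.filter (fun t : V × V × V × V × V =>
        qp G t.1 t.2.1 t.2.2.1 t.2.2.2.1 ∧ G.Adj t.1 t.2.2.2.2 ∧
          G.Adj t.2.2.2.1 t.2.2.2.2 ∧ G.Adj t.2.1 t.2.2.2.2)).card := by
  apply Finset.card_nbij' (fun t => (t.2.2.2.1, t.2.2.1, t.2.1, t.1, t.2.2.2.2))
    (fun t => (t.2.2.2.1, t.2.2.1, t.2.1, t.1, t.2.2.2.2))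
  · rintro ⟨a, b, c, d, z⟩ ht
    simp only [Finset.mem_coe, Finset.mem_filter, Finset.mem_univ, true_and] at ht ⊢
    exact ⟨qp_rev ht.1, ht.2.2.1, ht.2.1, ht.2.2.2⟩
  · rintro ⟨a, b, c, d, z⟩ ht
    simp only [Finset.mem_coe, Finset.mem_filter, Finset.mem_univ, true_and] at ht ⊢
    exact ⟨qp_rev ht.1, ht.2.2.1, ht.2.1, ht.2.2.2⟩
  · rintro ⟨a, b, c, d, z⟩ _; rfl
  · rintro ⟨a, b, c, d, z⟩ _; rfl

lemma card_z_both (h : G.IsSRGWith n k 1 2) (a b c d : V) :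
    (Finset.univ.filter (fun z => tp G a b c d z)).card +
      (Finset.univ.filter (fun z => qp G a b c d ∧ G.Adj a z ∧ G.Adj d z ∧
        (G.Adj b z ∨ G.Adj c z))).card = if qp G a b c d then 2 else 0 := by
  split_ifs with hq
  · have had : ¬ G.Adj a d := hq.2.2.2.2.1
    have hnead : a ≠ d := (qp_ne hq).2.1
    have e1 : Finset.univ.filter (fun z => tp G a b c d z)
        = (cn G a d).filter (fun z => ¬ G.Adj b z ∧ ¬ G.Adj c z) := by
      ext z
      simp only [Finset.mem_filter, Finset.mem_univ, true_and, mem_cn]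
      constructor
      · rintro ⟨_, h2, h3, h4, h5⟩; exact ⟨⟨h2, h3⟩, h4, h5⟩
      · rintro ⟨⟨h2, h3⟩, h4, h5⟩; exact ⟨hq, h2, h3, h4, h5⟩
    have e2 : Finset.univ.filter (fun z => qp G a b c d ∧ G.Adj a z ∧ G.Adj d z ∧
        (G.Adj b z ∨ G.Adj c z))
        = (cn G a d).filter (fun z => ¬ (¬ G.Adj b z ∧ ¬ G.Adj c z)) := by
      ext z
      simp only [Finset.mem_filter, Finset.mem_univ, true_and, mem_cn]
      constructor
      · rintro ⟨_, h2, h3, h4⟩; exact ⟨⟨h2, h3⟩, by tauto⟩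
      · rintro ⟨⟨h2, h3⟩, h4⟩; exact ⟨hq, h2, h3, by tauto⟩
    rw [e1, e2, Finset.card_filter_add_card_filter_not, cn_not_adj h had hnead]
  · rw [Finset.card_eq_zero.2, Finset.card_eq_zero.2]
    · rw [Finset.filter_eq_empty_iff]; intro z _ hz; exact hq hz.1
    · rw [Finset.filter_eq_empty_iff]; intro z _ hz; exact hq hz.1

lemma bad_split (h : G.IsSRGWith n k 1 2) :
    (Finset.univ.filter (fun t : V × V × V × V × V =>
        qp G t.1 t.2.1 t.2.2.1 t.2.2.2.1 ∧ G.Adj t.1 t.2.2.2.2 ∧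
          G.Adj t.2.2.2.1 t.2.2.2.2 ∧ (G.Adj t.2.1 t.2.2.2.2 ∨ G.Adj t.2.2.1 t.2.2.2.2))).card
      = 2 * (n * (k * (k - 2))) := by
  have hsplit : (Finset.univ.filter (fun t : V × V × V × V × V =>
      qp G t.1 t.2.1 t.2.2.1 t.2.2.2.1 ∧ G.Adj t.1 t.2.2.2.2 ∧
        G.Adj t.2.2.2.1 t.2.2.2.2 ∧ (G.Adj t.2.1 t.2.2.2.2 ∨ G.Adj t.2.2.1 t.2.2.2.2)))
      = (Finset.univ.filter (fun t : V × V × V × V × V =>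
          qp G t.1 t.2.1 t.2.2.1 t.2.2.2.1 ∧ G.Adj t.1 t.2.2.2.2 ∧
            G.Adj t.2.2.2.1 t.2.2.2.2 ∧ G.Adj t.2.1 t.2.2.2.2))
        ∪ (Finset.univ.filter (fun t : V × V × V × V × V =>
          qp G t.1 t.2.1 t.2.2.1 t.2.2.2.1 ∧ G.Adj t.1 t.2.2.2.2 ∧
            G.Adj t.2.2.2.1 t.2.2.2.2 ∧ G.Adj t.2.2.1 t.2.2.2.2)) := by
    ext t
    simp only [Finset.mem_filter, Finset.mem_univ, true_and, Finset.mem_union]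
    tauto
  rw [hsplit, Finset.card_union_of_disjoint, Bad1_count h, Bad2_eq_Bad1, Bad1_count h,
    two_mul]
  rw [Finset.disjoint_left]
  rintro ⟨a, b, c, d, z⟩ ht1 ht2
  simp only [Finset.mem_filter, Finset.mem_univ, true_and] at ht1 ht2
  obtain ⟨hq, haz, hdz, hbz⟩ := ht1
  exact w_not_adj_c h hq.1 hq.2.1 (qp_ne hq).1 haz hbz ht2.2.2.2.symm

lemma count_key (h : G.IsSRGWith n k 1 2) :
    (Finset.univ.filter (fun t : V × V × V × V × V =>
        tp G t.1 t.2.1 t.2.2.1 t.2.2.2.1 t.2.2.2.2)).card + 2 * (n * (k * (k - 2)))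
      = 2 * (n * (k * ((k - 2) * (k - 3)))) := by
  rw [← bad_split h, ← Q_count h]
  have hQ : (Finset.univ.filter
      (fun t : V × V × V × V => qp G t.1 t.2.1 t.2.2.1 t.2.2.2)).card
      = ∑ a : V, ∑ b : V, ∑ c : V,
          (Finset.univ.filter (fun d => qp G a b c d)).card := by
    simp only [card_filter_prod]
  calc (Finset.univ.filter (fun t : V × V × V × V × V =>
        tp G t.1 t.2.1 t.2.2.1 t.2.2.2.1 t.2.2.2.2)).card +
      (Finset.univ.filter (fun t : V × V × V × V × V =>
        qp G t.1 t.2.1 t.2.2.1 t.2.2.2.1 ∧ G.Adj t.1 t.2.2.2.2 ∧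
          G.Adj t.2.2.2.1 t.2.2.2.2 ∧
            (G.Adj t.2.1 t.2.2.2.2 ∨ G.Adj t.2.2.1 t.2.2.2.2))).card
      = ∑ a : V, ∑ b : V, ∑ c : V, ∑ d : V,
          ((Finset.univ.filter (fun z => tp G a b c d z)).card +
            (Finset.univ.filter (fun z => qp G a b c d ∧ G.Adj a z ∧ G.Adj d z ∧
              (G.Adj b z ∨ G.Adj c z))).card) := by
        simp only [card_filter_prod, ← Finset.sum_add_distrib]
    _ = ∑ a : V, ∑ b : V, ∑ c : V, ∑ d : V, (if qp G a b c d then 2 else 0) :=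
        Finset.sum_congr rfl fun a _ => Finset.sum_congr rfl fun b _ =>
          Finset.sum_congr rfl fun c _ => Finset.sum_congr rfl fun d _ =>
            card_z_both h a b c d
    _ = ∑ a : V, ∑ b : V, ∑ c : V,
          (Finset.univ.filter (fun d => qp G a b c d)).card * 2 :=
        Finset.sum_congr rfl fun a _ => Finset.sum_congr rfl fun b _ =>
          Finset.sum_congr rfl fun c _ => sum_ite_count _ _
    _ = 2 * (Finset.univ.filter
          (fun t : V × V × V × V => qp G t.1 t.2.1 t.2.2.1 t.2.2.2)).card := by
        rw [hQ]
        simp only [Finset.mul_sum]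
        exact Finset.sum_congr rfl fun a _ => Finset.sum_congr rfl fun b _ =>
          Finset.sum_congr rfl fun c _ => (mul_comm _ _)

lemma card5 {α : Type*} [DecidableEq α] {a b c d e : α} (h1 : a ≠ b) (h2 : a ≠ c) (h3 : a ≠ d)
    (h4 : a ≠ e) (h5 : b ≠ c) (h6 : b ≠ d) (h7 : b ≠ e) (h8 : c ≠ d) (h9 : c ≠ e)
    (h10 : d ≠ e) : ({a, b, c, d, e} : Finset α).card = 5 := by
  rw [Finset.card_insert_of_notMem (by simp [h1, h2, h3, h4]),
    Finset.card_insert_of_notMem (by simp [h5, h6, h7]),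
    Finset.card_insert_of_notMem (by simp [h8, h9]),
    Finset.card_insert_of_notMem (by simp [h10]), Finset.card_singleton]

lemma pent_iso {a b c d e : V} (hab : G.Adj a b) (hbc : G.Adj b c) (hcd : G.Adj c d)
    (hde : G.Adj d e) (hea : G.Adj a e) (hac : ¬ G.Adj a c) (had : ¬ G.Adj a d)
    (hbd : ¬ G.Adj b d) (hbe : ¬ G.Adj b e) (hce : ¬ G.Adj c e)
    (n2 : a ≠ c) (n3 : a ≠ d) (n4 : a ≠ e) (n6 : b ≠ d) (n7 : b ≠ e) (n9 : c ≠ e) :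
    Nonempty (G.induce (↑({a, b, c, d, e} : Finset V) : Set V) ≃g cycleGraph 5) := by
  set s : Set V := ↑({a, b, c, d, e} : Finset V) with hs
  have hmem : ∀ i : Fin 5, (![a, b, c, d, e] i) ∈ s := by
    intro i; fin_cases i <;> simp [hs]
  let g : Fin 5 → s := fun i => ⟨![a, b, c, d, e] i, hmem i⟩
  have hinj : Function.Injective g := by
    have n1 : a ≠ b := hab.ne
    have n5 : b ≠ c := hbc.ne
    have n8 : c ≠ d := hcd.ne
    have n10 : d ≠ e := hde.ne
    intro i j hij
    have hval : (![a, b, c, d, e] : Fin 5 → V) i = ![a, b, c, d, e] j :=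
      congrArg Subtype.val hij
    fin_cases i <;> fin_cases j <;> simp_all <;> simp_all [eq_comm]
  have hsurj : Function.Surjective g := by
    rintro ⟨x, hx⟩
    simp only [hs, Finset.coe_insert, Set.mem_insert_iff, Finset.coe_singleton,
      Set.mem_singleton_iff] at hx
    rcases hx with rfl | rfl | rfl | rfl | rfl
    · exact ⟨0, rfl⟩
    · exact ⟨1, rfl⟩
    · exact ⟨2, rfl⟩
    · exact ⟨3, rfl⟩
    · exact ⟨4, rfl⟩
  refine ⟨(RelIso.mk (Equiv.ofBijective g ⟨hinj, hsurj⟩) ?_).symm⟩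
  intro i j
  show (G.induce s).Adj (g i) (g j) ↔ (cycleGraph 5).Adj i j
  have : (G.induce s).Adj (g i) (g j) ↔ G.Adj (![a, b, c, d, e] i) (![a, b, c, d, e] j) :=
    Iff.rfl
  rw [this]
  have hca : ¬ G.Adj c a := fun h' => hac h'.symm
  have hda : ¬ G.Adj d a := fun h' => had h'.symm
  have hdb : ¬ G.Adj d b := fun h' => hbd h'.symm
  have heb : ¬ G.Adj e b := fun h' => hbe h'.symm
  have hec : ¬ G.Adj e c := fun h' => hce h'.symm
  fin_cases i <;> fin_cases j <;>
    simp [cycleGraph_adj, hab, hbc, hcd, hde, hea, hac, had, hbd, hbe, hce,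
      hab.symm, hbc.symm, hcd.symm, hde.symm, hea.symm,
      hca, hda, hdb, heb, hec, G.irrefl] <;> decide



lemma tp_distinct {W : Type*} {H : SimpleGraph W} {a b c d e : W}
    (ht : (H.Adj a b ∧ H.Adj b c ∧ H.Adj c d ∧ ¬ H.Adj a c ∧ ¬ H.Adj a d ∧ ¬ H.Adj b d) ∧
      H.Adj a e ∧ H.Adj d e ∧ ¬ H.Adj b e ∧ ¬ H.Adj c e) :
    a ≠ b ∧ a ≠ c ∧ a ≠ d ∧ a ≠ e ∧ b ≠ c ∧ b ≠ d ∧ b ≠ e ∧ c ≠ d ∧ c ≠ e ∧ d ≠ e := by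
  obtain ⟨⟨h1, h2, h3, h4, h5, h6⟩, h7, h8, h9, h10⟩ := ht
  refine ⟨h1.ne, ?_, ?_, h7.ne, h2.ne, ?_, ?_, h3.ne, ?_, h8.ne⟩
  · rintro rfl; exact h5 h3
  · rintro rfl; exact h4 h3.symm
  · rintro rfl; exact h5 h1
  · rintro rfl; exact h6 h8.symm
  · rintro rfl; exact h4 h7

set_option maxRecDepth 10000 in
lemma S5_card : (Finset.univ.filter (fun t : Fin 5 × Fin 5 × Fin 5 × Fin 5 × Fin 5 =>
    tp (cycleGraph 5) t.1 t.2.1 t.2.2.1 t.2.2.2.1 t.2.2.2.2 ∧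
      ({t.1, t.2.1, t.2.2.1, t.2.2.2.1, t.2.2.2.2} : Finset (Fin 5)) = Finset.univ)).card
    = 10 := by decide

lemma fiber_card {s : Finset V} (hc : s.card = 5)
    (φ : G.induce (↑s : Set V) ≃g cycleGraph 5) :
    (Finset.univ.filter (fun t : V × V × V × V × V =>
      tp G t.1 t.2.1 t.2.2.1 t.2.2.2.1 t.2.2.2.2 ∧
        ({t.1, t.2.1, t.2.2.1, t.2.2.2.1, t.2.2.2.2} : Finset V) = s)).card = 10 := by
  classical
  let j : Fin 5 × Fin 5 × Fin 5 × Fin 5 × Fin 5 → V × V × V × V × V := fun u =>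
    (↑(φ.symm u.1), ↑(φ.symm u.2.1), ↑(φ.symm u.2.2.1), ↑(φ.symm u.2.2.2.1),
      ↑(φ.symm u.2.2.2.2))
  have hvi : Function.Injective (fun i : Fin 5 => (↑(φ.symm i) : V)) := by
    intro i j hij
    exact φ.symm.injective (Subtype.val_injective hij)
  have hjinj : Function.Injective j := by
    rintro ⟨u1, u2, u3, u4, u5⟩ ⟨v1, v2, v3, v4, v5⟩ huv
    simp only [j, Prod.mk.injEq] at huv
    exact Prod.ext (hvi huv.1) (Prod.ext (hvi huv.2.1) (Prod.ext (hvi huv.2.2.1)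
      (Prod.ext (hvi huv.2.2.2.1) (hvi huv.2.2.2.2))))
  have himg : (Finset.univ.filter (fun t : V × V × V × V × V =>
      tp G t.1 t.2.1 t.2.2.1 t.2.2.2.1 t.2.2.2.2 ∧
        ({t.1, t.2.1, t.2.2.1, t.2.2.2.1, t.2.2.2.2} : Finset V) = s))
      = (Finset.univ.filter (fun t : Fin 5 × Fin 5 × Fin 5 × Fin 5 × Fin 5 =>
          tp (cycleGraph 5) t.1 t.2.1 t.2.2.1 t.2.2.2.1 t.2.2.2.2 ∧
            ({t.1, t.2.1, t.2.2.1, t.2.2.2.1, t.2.2.2.2} : Finset (Fin 5)) =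
              Finset.univ)).image j := by
    ext t
    simp only [Finset.mem_filter, Finset.mem_univ, true_and, Finset.mem_image]
    constructor
    · rintro ⟨ht, hset⟩
      have hd := tp_distinct ht
      have m1 : t.1 ∈ (↑s : Set V) := by
        rw [← hset]; simp
      have m2 : t.2.1 ∈ (↑s : Set V) := by
        rw [← hset]; simp
      have m3 : t.2.2.1 ∈ (↑s : Set V) := by
        rw [← hset]; simp
      have m4 : t.2.2.2.1 ∈ (↑s : Set V) := by
        rw [← hset]; simp
      have m5 : t.2.2.2.2 ∈ (↑s : Set V) := by
        rw [← hset]; simp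
      refine ⟨(φ ⟨t.1, m1⟩, φ ⟨t.2.1, m2⟩, φ ⟨t.2.2.1, m3⟩, φ ⟨t.2.2.2.1, m4⟩,
        φ ⟨t.2.2.2.2, m5⟩), ⟨⟨⟨?_, ?_, ?_, ?_, ?_, ?_⟩, ?_, ?_, ?_, ?_⟩, ?_⟩, ?_⟩
      · exact φ.map_adj_iff.2 ht.1.1
      · exact φ.map_adj_iff.2 ht.1.2.1
      · exact φ.map_adj_iff.2 ht.1.2.2.1
      · exact fun hx => ht.1.2.2.2.1 (φ.map_adj_iff.1 hx)
      · exact fun hx => ht.1.2.2.2.2.1 (φ.map_adj_iff.1 hx)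
      · exact fun hx => ht.1.2.2.2.2.2 (φ.map_adj_iff.1 hx)
      · exact φ.map_adj_iff.2 ht.2.1
      · exact φ.map_adj_iff.2 ht.2.2.1
      · exact fun hx => ht.2.2.2.1 (φ.map_adj_iff.1 hx)
      · exact fun hx => ht.2.2.2.2 (φ.map_adj_iff.1 hx)
      · apply Finset.eq_univ_of_card
        rw [Fintype.card_fin]
        exact card5
          (fun hx => hd.1 (congrArg Subtype.val (φ.injective hx)))
          (fun hx => hd.2.1 (congrArg Subtype.val (φ.injective hx)))
          (fun hx => hd.2.2.1 (congrArg Subtype.val (φ.injective hx)))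
          (fun hx => hd.2.2.2.1 (congrArg Subtype.val (φ.injective hx)))
          (fun hx => hd.2.2.2.2.1 (congrArg Subtype.val (φ.injective hx)))
          (fun hx => hd.2.2.2.2.2.1 (congrArg Subtype.val (φ.injective hx)))
          (fun hx => hd.2.2.2.2.2.2.1 (congrArg Subtype.val (φ.injective hx)))
          (fun hx => hd.2.2.2.2.2.2.2.1 (congrArg Subtype.val (φ.injective hx)))
          (fun hx => hd.2.2.2.2.2.2.2.2.1 (congrArg Subtype.val (φ.injective hx)))
          (fun hx => hd.2.2.2.2.2.2.2.2.2 (congrArg Subtype.val (φ.injective hx)))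
      · simp only [j, RelIso.symm_apply_apply]
    · rintro ⟨u, ⟨hu, huniv⟩, rfl⟩
      have hd := tp_distinct hu
      constructor
      · refine ⟨⟨?_, ?_, ?_, ?_, ?_, ?_⟩, ?_, ?_, ?_, ?_⟩
        · exact φ.symm.map_adj_iff.2 hu.1.1
        · exact φ.symm.map_adj_iff.2 hu.1.2.1
        · exact φ.symm.map_adj_iff.2 hu.1.2.2.1
        · exact fun hx => hu.1.2.2.2.1 (φ.symm.map_adj_iff.1 hx)
        · exact fun hx => hu.1.2.2.2.2.1 (φ.symm.map_adj_iff.1 hx)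
        · exact fun hx => hu.1.2.2.2.2.2 (φ.symm.map_adj_iff.1 hx)
        · exact φ.symm.map_adj_iff.2 hu.2.1
        · exact φ.symm.map_adj_iff.2 hu.2.2.1
        · exact fun hx => hu.2.2.2.1 (φ.symm.map_adj_iff.1 hx)
        · exact fun hx => hu.2.2.2.2 (φ.symm.map_adj_iff.1 hx)
      · refine Finset.eq_of_subset_of_card_le ?_ ?_
        · simp only [Finset.insert_subset_iff, Finset.singleton_subset_iff]
          exact ⟨(φ.symm u.1).2, (φ.symm u.2.1).2, (φ.symm u.2.2.1).2,
            (φ.symm u.2.2.2.1).2, (φ.symm u.2.2.2.2).2⟩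
        · rw [hc]
          rw [card5
            (fun hx => hd.1 (φ.symm.injective (Subtype.val_injective hx)))
            (fun hx => hd.2.1 (φ.symm.injective (Subtype.val_injective hx)))
            (fun hx => hd.2.2.1 (φ.symm.injective (Subtype.val_injective hx)))
            (fun hx => hd.2.2.2.1 (φ.symm.injective (Subtype.val_injective hx)))
            (fun hx => hd.2.2.2.2.1 (φ.symm.injective (Subtype.val_injective hx)))
            (fun hx => hd.2.2.2.2.2.1 (φ.symm.injective (Subtype.val_injective hx)))
            (fun hx => hd.2.2.2.2.2.2.1 (φ.symm.injective (Subtype.val_injective hx)))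
            (fun hx => hd.2.2.2.2.2.2.2.1 (φ.symm.injective (Subtype.val_injective hx)))
            (fun hx => hd.2.2.2.2.2.2.2.2.1 (φ.symm.injective (Subtype.val_injective hx)))
            (fun hx => hd.2.2.2.2.2.2.2.2.2 (φ.symm.injective (Subtype.val_injective hx)))]
  rw [himg, Finset.card_image_of_injective _ hjinj, S5_card]

lemma T_card : (Finset.univ.filter (fun t : V × V × V × V × V =>
    tp G t.1 t.2.1 t.2.2.1 t.2.2.2.1 t.2.2.2.2)).card = 10 * inducedCycleCount G 5 := by
  classical
  set Pent : Finset (Finset V) := Finset.univ.filter (fun s : Finset V =>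
    s.card = 5 ∧ Nonempty (G.induce (↑s : Set V) ≃g cycleGraph 5)) with hPent
  have h1 : inducedCycleCount G 5 = Pent.card := by
    rw [inducedCycleCount, ← Set.ncard_coe_finset]
    congr 1
    ext s
    simp [hPent]
  rw [h1]
  rw [Finset.card_eq_sum_card_fiberwise
    (f := fun t : V × V × V × V × V =>
      ({t.1, t.2.1, t.2.2.1, t.2.2.2.1, t.2.2.2.2} : Finset V)) (t := Pent) ?_]
  · rw [Finset.sum_congr rfl (fun s hs => ?_), Finset.sum_const, smul_eq_mul, mul_comm]
    simp only [hPent, Finset.mem_filter, Finset.mem_univ, true_and] at hs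
    obtain ⟨hc, ⟨φ⟩⟩ := hs
    rw [Finset.filter_filter]
    exact fiber_card hc φ
  · intro t ht
    simp only [Finset.mem_coe, Finset.mem_filter, Finset.mem_univ, true_and] at ht
    have hd := tp_distinct ht
    simp only [hPent, Finset.mem_coe, Finset.mem_filter, Finset.mem_univ, true_and]
    constructor
    · exact card5 hd.1 hd.2.1 hd.2.2.1 hd.2.2.2.1 hd.2.2.2.2.1 hd.2.2.2.2.2.1
        hd.2.2.2.2.2.2.1 hd.2.2.2.2.2.2.2.1 hd.2.2.2.2.2.2.2.2.1 hd.2.2.2.2.2.2.2.2.2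
    · exact pent_iso ht.1.1 ht.1.2.1 ht.1.2.2.1 ht.2.2.1 ht.2.1 ht.1.2.2.2.1
        ht.1.2.2.2.2.1 ht.1.2.2.2.2.2 ht.2.2.2.1 ht.2.2.2.2
        hd.2.1 hd.2.2.1 hd.2.2.2.1 hd.2.2.2.2.2.1 hd.2.2.2.2.2.2.1 hd.2.2.2.2.2.2.2.2.1

end Pentagon

theorem stmt_8 {V : Type*} [Fintype V] (G : SimpleGraph V) [DecidableRel G.Adj]
    {n k : ℕ} (h : G.IsSRGWith n k 1 2) :
    5 * inducedCycleCount G 5 = n * k * (k - 2) * (k - 4) := by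
  haveI := Classical.decEq V
  have hT := Pentagon.count_key h
  rw [Pentagon.T_card] at hT
  set P := inducedCycleCount G 5 with hP
  rcases le_or_gt 4 k with h4 | h4
  · have hk3 : k - 3 = (k - 4) + 1 := by omega
    have expand : n * (k * ((k - 2) * (k - 3)))
        = n * (k * ((k - 2) * (k - 4))) + n * (k * (k - 2)) := by
      rw [hk3]; ring
    rw [expand] at hT
    have hgoal : n * k * (k - 2) * (k - 4) = n * (k * ((k - 2) * (k - 4))) := by ring
    rw [hgoal]
    generalize n * (k * ((k - 2) * (k - 4))) = B at hT ⊢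
    generalize n * (k * (k - 2)) = A at hT
    omega
  · have hz : (k - 2) * (k - 3) = 0 := by
      have : k - 2 = 0 ∨ k - 3 = 0 := by omega
      rcases this with h' | h' <;> rw [h'] <;> ring
    have hz4 : k - 4 = 0 := by omega
    rw [hz, mul_zero, mul_zero, mul_zero] at hT
    rw [hz4, mul_zero]
    generalize n * (k * (k - 2)) = A at hT
    omega
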